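/- For the curve c : [−1,1] → ℝ³ with ċ(s) = (1/√2)(1, s², √(1−s⁴)), the principal normal n(s) = (s/|s|)(0, √(1−s⁴), −s²) and binormal b(s) = (s/|s|)(1/√2)(−1, s², √(1−s⁴)) (defined for 0 < |s| < 1) are discontinuous at s = 0 as S²-valued functions: lim_{s→0⁺} n(s) = (0,1,0) ≠ (0,−1,0) = lim_{s→0⁻} n(s); yet both [n(s)] and [b(s)] extend continuously at s = 0 as ℝP²-valued functions. -/

import Mathlib

open Filter

noncomputable abbrev E3 := EuclideanSpace ℝ (Fin 3)

noncomputable def vec3 (a b c : ℝ) : E3 := WithLp.toLp 2 ![a, b, c]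

/-- The projective distance between unit vectors:
`d_{ℝP²}([y],[z]) = min{arccos(y•z), arccos(−y•z)}`. -/
noncomputable def dProj (y z : E3) : ℝ :=
  min (Real.arccos (inner ℝ y z : ℝ)) (Real.arccos (-(inner ℝ y z : ℝ)))

lemma inner_vec3 (a b c d e f : ℝ) :
    (inner ℝ (vec3 a b c) (vec3 d e f) : ℝ) = a*d + b*e + c*f := by
  simp [vec3, PiLp.inner_apply, Fin.sum_univ_three, RCLike.inner_apply]
  ring

lemma vec3_decomp (b c : ℝ) : vec3 0 b c = b • vec3 0 1 0 + c • vec3 0 0 1 := by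
  ext i; fin_cases i <;> simp [vec3]

noncomputable def Dfun (t : ℝ) : ℝ := min (Real.arccos t) (Real.arccos (-t))

lemma dProj_eq (y z : E3) : dProj y z = Dfun (inner ℝ y z : ℝ) := rfl

lemma Dfun_cont : Continuous Dfun :=
  Real.continuous_arccos.min (Real.continuous_arccos.comp continuous_neg)

lemma Dfun_one : Dfun 1 = 0 := by
  simp [Dfun, Real.arccos_one, Real.arccos_neg_one, min_eq_left Real.pi_nonneg]

lemma Dfun_neg_one : Dfun (-1) = 0 := by
  simp [Dfun, Real.arccos_one, Real.arccos_neg_one, min_eq_right Real.pi_nonneg]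

lemma sqrt_tendsto : Tendsto (fun s : ℝ => Real.sqrt (1 - s ^ 4)) (nhds 0) (nhds 1) := by
  have h : Continuous fun s : ℝ => Real.sqrt (1 - s ^ 4) :=
    Real.continuous_sqrt.comp (continuous_const.sub (continuous_pow 4))
  simpa using h.tendsto 0

/-- for the curve with `ċ(s) = (1/√2)(1, s², √(1−s⁴))`, the principal normal
`n(s) = (s/|s|)(0, √(1−s⁴), −s²)` and the binormal
`b(s) = (s/|s|)(1/√2)(−1, s², √(1−s⁴))` are discontinuous at `s = 0` as `S²`-valued maps
(`n(0⁺) = (0,1,0) ≠ (0,−1,0) = n(0⁻)`), yet both extend continuously at `s = 0` as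
`ℝP²`-valued maps. -/
theorem stmt_15 (nvec bvec : ℝ → E3)
    (hn : ∀ s, nvec s = (s / |s|) • vec3 0 (Real.sqrt (1 - s ^ 4)) (-(s ^ 2)))
    (hb : ∀ s, bvec s = (s / |s|) • ((Real.sqrt 2)⁻¹ • vec3 (-1) (s ^ 2) (Real.sqrt (1 - s ^ 4)))) :
    Tendsto nvec (nhdsWithin 0 (Set.Ioi 0)) (nhds (vec3 0 1 0)) ∧
    Tendsto nvec (nhdsWithin 0 (Set.Iio 0)) (nhds (vec3 0 (-1) 0)) ∧
    vec3 0 1 0 ≠ vec3 0 (-1) 0 ∧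
    Tendsto (fun s => dProj (nvec s) (vec3 0 1 0)) (nhdsWithin 0 {0}ᶜ) (nhds 0) ∧
    Tendsto (fun s => dProj (bvec s) ((Real.sqrt 2)⁻¹ • vec3 (-1) 0 1))
      (nhdsWithin 0 {0}ᶜ) (nhds 0) := by
  have hpos : ∀ s : ℝ, 0 < s → s / |s| = 1 := fun s hs => by
    rw [abs_of_pos hs, div_self hs.ne']
  have hneg : ∀ s : ℝ, s < 0 → s / |s| = -1 := fun s hs => by
    rw [abs_of_neg hs, div_neg, div_self hs.ne]
  have hsq : Tendsto (fun s : ℝ => Real.sqrt (1 - s ^ 4)) (nhdsWithin 0 (Set.Ioi 0)) (nhds 1) :=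
    sqrt_tendsto.mono_left nhdsWithin_le_nhds
  have hsq' : Tendsto (fun s : ℝ => Real.sqrt (1 - s ^ 4)) (nhdsWithin 0 (Set.Iio 0)) (nhds 1) :=
    sqrt_tendsto.mono_left nhdsWithin_le_nhds
  have hsqv : Tendsto (fun s : ℝ => -(s ^ 2)) (nhds (0:ℝ)) (nhds 0) := by
    simpa using ((continuous_pow 2).tendsto (0:ℝ)).neg
  refine ⟨?_, ?_, ?_, ?_, ?_⟩
  · -- n(0⁺)
    have key : ∀ s ∈ Set.Ioi (0:ℝ),
        Real.sqrt (1 - s ^ 4) • vec3 0 1 0 + (-(s ^ 2)) • vec3 0 0 1 = nvec s := by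
      intro s hs
      rw [hn, hpos s hs, one_smul]; exact (vec3_decomp _ _).symm
    refine Tendsto.congr' (eventually_nhdsWithin_of_forall key) ?_
    have := (hsq.smul_const (vec3 0 1 0)).add
      ((hsqv.mono_left nhdsWithin_le_nhds).smul_const (vec3 0 0 1))
    simpa using this
  · -- n(0⁻)
    have key : ∀ s ∈ Set.Iio (0:ℝ),
        Real.sqrt (1 - s ^ 4) • vec3 0 (-1) 0 + (s ^ 2) • vec3 0 0 1 = nvec s := by
      intro s hs
      rw [hn, hneg s hs, vec3_decomp]
      ext i; fin_cases i <;> simp [vec3]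
    refine Tendsto.congr' (eventually_nhdsWithin_of_forall key) ?_
    have h2 : Tendsto (fun s : ℝ => s ^ 2) (nhds (0:ℝ)) (nhds 0) := by
      simpa using (continuous_pow 2).tendsto (0:ℝ)
    have := (hsq'.smul_const (vec3 0 (-1) 0)).add
      ((h2.mono_left nhdsWithin_le_nhds).smul_const (vec3 0 0 1))
    simpa using this
  · -- ≠
    intro h
    have := congrArg (fun v : E3 => v 1) h
    simp [vec3] at this
    norm_num at this
  · -- dProj n
    have hsplit : (nhdsWithin (0:ℝ) {0}ᶜ) =
        nhdsWithin 0 (Set.Iio 0) ⊔ nhdsWithin 0 (Set.Ioi 0) := by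
      rw [← nhdsWithin_union, Set.Iio_union_Ioi]
    rw [hsplit, tendsto_sup]
    constructor
    · have key : ∀ s ∈ Set.Iio (0:ℝ),
          Dfun (-(Real.sqrt (1 - s ^ 4))) = dProj (nvec s) (vec3 0 1 0) := by
        intro s hs
        rw [dProj_eq, hn, real_inner_smul_left, inner_vec3, hneg s hs]
        ring_nf
      refine Tendsto.congr' (eventually_nhdsWithin_of_forall key) ?_
      have : Tendsto (fun s : ℝ => -(Real.sqrt (1 - s ^ 4))) (nhdsWithin 0 (Set.Iio 0))
          (nhds (-1)) := hsq'.neg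
      simpa [Dfun_neg_one, Function.comp_def] using (Dfun_cont.tendsto (-1)).comp this
    · have key : ∀ s ∈ Set.Ioi (0:ℝ),
          Dfun (Real.sqrt (1 - s ^ 4)) = dProj (nvec s) (vec3 0 1 0) := by
        intro s hs
        rw [dProj_eq, hn, real_inner_smul_left, inner_vec3, hpos s hs]
        ring_nf
      refine Tendsto.congr' (eventually_nhdsWithin_of_forall key) ?_
      simpa [Dfun_one, Function.comp_def] using (Dfun_cont.tendsto 1).comp hsq
  · -- dProj b
    have hsplit : (nhdsWithin (0:ℝ) {0}ᶜ) =
        nhdsWithin 0 (Set.Iio 0) ⊔ nhdsWithin 0 (Set.Ioi 0) := by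
      rw [← nhdsWithin_union, Set.Iio_union_Ioi]
    rw [hsplit, tendsto_sup]
    have hs2 : (Real.sqrt 2)⁻¹ * (Real.sqrt 2)⁻¹ = 1/2 := by
      rw [← mul_inv, Real.mul_self_sqrt (by norm_num : (2:ℝ) ≥ 0)]
      norm_num
    have hinner : ∀ s : ℝ, (inner ℝ (bvec s) ((Real.sqrt 2)⁻¹ • vec3 (-1) 0 1) : ℝ)
        = (s / |s|) * ((1 + Real.sqrt (1 - s ^ 4)) / 2) := by
      intro s
      rw [hb, real_inner_smul_left, real_inner_smul_left, real_inner_smul_right, inner_vec3]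
      have h2 : Real.sqrt 2 * Real.sqrt 2 = 2 := Real.mul_self_sqrt (by norm_num)
      have hne : Real.sqrt 2 ≠ 0 := by positivity
      field_simp
      rw [Real.sq_sqrt (by norm_num : (0:ℝ) ≤ 2)]; ring
    have hg : Tendsto (fun s : ℝ => (1 + Real.sqrt (1 - s ^ 4)) / 2) (nhds (0:ℝ)) (nhds 1) := by
      have : Tendsto (fun s : ℝ => (1 + Real.sqrt (1 - s ^ 4)) / 2) (nhds (0:ℝ)) (nhds ((1+1)/2)) :=
        ((tendsto_const_nhds.add sqrt_tendsto).div_const 2)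
      norm_num at this
      exact this
    constructor
    · have key : ∀ s ∈ Set.Iio (0:ℝ),
          Dfun (-((1 + Real.sqrt (1 - s ^ 4)) / 2)) =
            dProj (bvec s) ((Real.sqrt 2)⁻¹ • vec3 (-1) 0 1) := by
        intro s hs
        rw [dProj_eq, hinner, hneg s hs]
        ring_nf
      refine Tendsto.congr' (eventually_nhdsWithin_of_forall key) ?_
      have h1 : Tendsto (fun s : ℝ => -((1 + Real.sqrt (1 - s ^ 4)) / 2))
          (nhdsWithin 0 (Set.Iio 0)) (nhds (-1)) :=
        (hg.mono_left nhdsWithin_le_nhds).neg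
      simpa [Dfun_neg_one, Function.comp_def] using (Dfun_cont.tendsto (-1)).comp h1
    · have key : ∀ s ∈ Set.Ioi (0:ℝ),
          Dfun ((1 + Real.sqrt (1 - s ^ 4)) / 2) =
            dProj (bvec s) ((Real.sqrt 2)⁻¹ • vec3 (-1) 0 1) := by
        intro s hs
        rw [dProj_eq, hinner, hpos s hs]
        ring_nf
      refine Tendsto.congr' (eventually_nhdsWithin_of_forall key) ?_
      simpa [Dfun_one, Function.comp_def] using
        (Dfun_cont.tendsto 1).comp (hg.mono_left nhdsWithin_le_nhds)
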